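/- Let L be an invertible d × d real matrix and for each column j ∈ [d] let N_j := {i ∈ [d] : L_{i,j} ≠ 0}. Let 𝒮 be a nonempty finite family of subsets of [d] with strictly positive weights p : 𝒮 → ℝ, satisfying the coverage condition: for every j ∈ [d], ⋃_{S ∈ 𝒮 : j ∉ S} S = [d] \ {j}. If ∑_{S ∈ 𝒮} p(S) · #{j ∈ [d] : S ∩ N_j ≠ ∅} ≤ ∑_{S ∈ 𝒮} p(S) · #S, then there exists a permutation σ of [d] such that N_{σ(j)} = {j} for every j ∈ [d]; in particular every column of L contains exactly one nonzero entry. -/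
import Mathlib


/-- Deterministic core of the disentanglement theorem. Let `L` be an
invertible `d × d` real matrix with column supports `N j = {i | L i j ≠ 0}`. Let `𝒮` be
a nonempty finite family of subsets of `[d]` with strictly positive weights `p`,
satisfying the sufficient-coverage condition. If the weighted count of columns hit by
each `S` is at most the weighted count of elements of `S`, then there is a permutation
`σ` with `N (σ j) = {j}` for all `j`; in particular every column of `L` has exactly one
nonzero entry. -/
theorem column_supports_singleton_of_sparsity
    {d : ℕ} (L : Matrix (Fin d) (Fin d) ℝ) (hL : L.det ≠ 0)
    (N : Fin d → Set (Fin d)) (hN : ∀ j : Fin d, N j = {i | L i j ≠ 0})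
    (𝒮 : Finset (Set (Fin d))) (h𝒮 : 𝒮.Nonempty)
    (p : Set (Fin d) → ℝ) (hp : ∀ S ∈ 𝒮, 0 < p S)
    (hcov : ∀ j : Fin d, (⋃ S ∈ {S | S ∈ 𝒮 ∧ j ∉ S}, S) = Set.univ \ {j})
    (hineq : ∑ S ∈ 𝒮, p S * (Set.ncard {j : Fin d | (S ∩ N j).Nonempty} : ℝ) ≤
      ∑ S ∈ 𝒮, p S * (Set.ncard S : ℝ)) :
    (∃ σ : Equiv.Perm (Fin d), ∀ j : Fin d, N (σ j) = {j}) ∧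
      ∀ j : Fin d, ∃! i : Fin d, L i j ≠ 0 := by
  classical
  -- Step 1: a permutation hitting each column's support.
  obtain ⟨σ, hσ⟩ : ∃ σ : Equiv.Perm (Fin d), ∀ j, L (σ j) j ≠ 0 := by
    rw [Matrix.det_apply] at hL
    obtain ⟨σ, -, hσ⟩ := Finset.exists_ne_zero_of_sum_ne_zero hL
    refine ⟨σ, fun j h0 => hσ ?_⟩
    have hz : ∏ i : Fin d, L (σ i) i = 0 := Finset.prod_eq_zero (Finset.mem_univ j) h0
    rw [hz, smul_zero]
  have hmem : ∀ j, σ j ∈ N j := fun j => by rw [hN]; exact hσ j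
  -- Step 2: the hit-set of each `S` contains `σ.symm '' S`.
  have hsub : ∀ S : Set (Fin d), (⇑σ.symm '' S) ⊆ {j : Fin d | (S ∩ N j).Nonempty} := by
    rintro S j ⟨i, hiS, rfl⟩
    exact ⟨i, hiS, by simpa using hmem (σ.symm i)⟩
  have hcard : ∀ S : Set (Fin d), (⇑σ.symm '' S).ncard = S.ncard := fun S =>
    Set.ncard_image_of_injective S σ.symm.injective
  have hle : ∀ S ∈ 𝒮, p S * (Set.ncard S : ℝ) ≤
      p S * (Set.ncard {j : Fin d | (S ∩ N j).Nonempty} : ℝ) := by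
    intro S hS
    have h1 : S.ncard ≤ Set.ncard {j : Fin d | (S ∩ N j).Nonempty} := by
      rw [← hcard S]
      exact Set.ncard_le_ncard (hsub S) (Set.toFinite _)
    exact mul_le_mul_of_nonneg_left (by exact_mod_cast h1) (hp S hS).le
  -- Step 3: termwise equality
  have hsum : ∑ S ∈ 𝒮, p S * (Set.ncard S : ℝ) =
      ∑ S ∈ 𝒮, p S * (Set.ncard {j : Fin d | (S ∩ N j).Nonempty} : ℝ) :=
    le_antisymm (Finset.sum_le_sum hle) hineq
  have heqterm := (Finset.sum_eq_sum_iff_of_le hle).mp hsum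
  -- Step 4: for each S ∈ 𝒮, hit-set equals σ.symm '' S.
  have hHS : ∀ S ∈ 𝒮, {j : Fin d | (S ∩ N j).Nonempty} = ⇑σ.symm '' S := by
    intro S hS
    have h1 : p S * (Set.ncard S : ℝ) =
        p S * (Set.ncard {j : Fin d | (S ∩ N j).Nonempty} : ℝ) := heqterm S hS
    have h2 : (Set.ncard S : ℝ) = (Set.ncard {j : Fin d | (S ∩ N j).Nonempty} : ℝ) :=
      mul_left_cancel₀ (hp S hS).ne' h1
    have h3 : Set.ncard {j : Fin d | (S ∩ N j).Nonempty} ≤ (⇑σ.symm '' S).ncard := by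
      rw [hcard S]; exact_mod_cast h2.ge
    exact (Set.eq_of_subset_of_ncard_le (hsub S) h3 (Set.toFinite _)).symm
  -- Step 5: each column support is a singleton.
  have hsingle : ∀ j, N j = {σ j} := by
    intro j
    apply Set.eq_singleton_iff_unique_mem.mpr
    refine ⟨hmem j, fun k hk => ?_⟩
    by_contra hne
    have hkmem : k ∈ Set.univ \ {σ j} := ⟨Set.mem_univ k, hne⟩
    rw [← hcov (σ j)] at hkmem
    simp only [Set.mem_iUnion] at hkmem
    obtain ⟨S, ⟨hS𝒮, hσjS⟩, hkS⟩ := hkmem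
    have : j ∈ {j : Fin d | (S ∩ N j).Nonempty} := ⟨k, hkS, hk⟩
    rw [hHS S hS𝒮] at this
    obtain ⟨i, hiS, hi⟩ := this
    apply hσjS
    have : σ j = i := by
      have := congrArg σ hi
      simpa using this.symm
    rwa [this]
  constructor
  · exact ⟨σ.symm, fun j => by rw [hsingle (σ.symm j)]; simp⟩
  · intro j
    refine ⟨σ j, hσ j, fun i hi => ?_⟩
    have : i ∈ N j := by rw [hN]; exact hi
    rw [hsingle j] at this
    exact this
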